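/- Fix n ≥ 2, an integer 1 ≤ m ≤ n−1, real k ≥ 1 with k ≠ n/4, and a ∈ (0,1). Let λ = −√(1−a²)/a appear with multiplicity m and μ = a/√(1−a²) with multiplicity n−m as principal curvatures, S = mλ² + (n−m)μ², H = (mλ + (n−m)μ)/n. Then the equation ∑λᵢ³ + (n²/(2k))H³ − (n/(2k)+1)·H·S = 0 (where ∑λᵢ³ = mλ³+(n−m)μ³) holds if and only if a² = (m−2k)/(n−4k). -/

import Mathlib

theorem clifford_torus_k_extremal (n m : ℕ) (hn : 2 ≤ n) (hm1 : 1 ≤ m) (hm2 : m ≤ n - 1)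
    (k : ℝ) (hk : 1 ≤ k) (hk4 : k ≠ n / 4) (a : ℝ) (ha : a ∈ Set.Ioo (0 : ℝ) 1)
    (lam mu S H : ℝ)
    (hlam : lam = -Real.sqrt (1 - a ^ 2) / a)
    (hmu : mu = a / Real.sqrt (1 - a ^ 2))
    (hS : S = m * lam ^ 2 + (n - m : ℝ) * mu ^ 2)
    (hH : H = (m * lam + (n - m : ℝ) * mu) / n) :
    (m * lam ^ 3 + (n - m : ℝ) * mu ^ 3) + n ^ 2 / (2 * k) * H ^ 3
        - (n / (2 * k) + 1) * H * S = 0 ↔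
      a ^ 2 = (m - 2 * k) / (n - 4 * k) := by
  obtain ⟨ha0, ha1⟩ := ha
  have hmn : m < n := by omega
  have hmR : (1:ℝ) ≤ (m:ℝ) := by exact_mod_cast hm1
  have hmnR : (m:ℝ) + 1 ≤ (n:ℝ) := by exact_mod_cast hmn
  have h1a : (0:ℝ) < 1 - a ^ 2 := by nlinarith
  set s := Real.sqrt (1 - a ^ 2) with hsdef
  have hs2 : s ^ 2 = 1 - a ^ 2 := Real.sq_sqrt h1a.le
  have hs0 : 0 < s := Real.sqrt_pos.2 h1a
  have hk0 : (0:ℝ) < k := lt_of_lt_of_le one_pos hk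
  have hn0 : (0:ℝ) < (n:ℝ) := by linarith
  have hn4 : (n:ℝ) - 4 * k ≠ 0 := by
    intro h; apply hk4; linarith
  have hmul : 2 * k * (n:ℝ) * a ^ 3 * s ^ 3 ≠ 0 := by positivity
  have key : ((m * lam ^ 3 + (n - m : ℝ) * mu ^ 3) + n ^ 2 / (2 * k) * H ^ 3
        - (n / (2 * k) + 1) * H * S) * (2 * k * (n:ℝ) * a ^ 3 * s ^ 3)
      = (m:ℝ) * ((n:ℝ) - m) * (((m:ℝ) - 2 * k) - ((n:ℝ) - 4 * k) * a ^ 2) := by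
    subst hlam hmu hS hH
    field_simp
    ring_nf
    linear_combination (((-1*(n:ℝ) ^ 2*(m:ℝ)*a ^ 4) + (2*(n:ℝ)*(m:ℝ) ^ 2*a ^ 4) + (-1*(m:ℝ) ^ 3*a ^ 4) + (2*(n:ℝ)*(m:ℝ)*k*a ^ 4) + (-2*(m:ℝ) ^ 2*k*a ^ 4) + (2*(n:ℝ)*(m:ℝ) ^ 2*a ^ 2) + (-1*(m:ℝ) ^ 3*a ^ 2) + (-1*(n:ℝ) ^ 2*(m:ℝ)*a ^ 2) + (2*(n:ℝ)*(m:ℝ)*k*a ^ 2) + (-2*(n:ℝ)*(m:ℝ)*k) + (-1*(m:ℝ) ^ 3) + (1*(n:ℝ)*(m:ℝ) ^ 2) + (-2*(m:ℝ) ^ 2*k*a ^ 2) + (2*(m:ℝ) ^ 2*k))*s ^ 0 + ((3*(n:ℝ)*(m:ℝ) ^ 2*a ^ 2) + (-2*(m:ℝ) ^ 3*a ^ 2) + (-1*(n:ℝ) ^ 2*(m:ℝ)*a ^ 2) + (-2*(n:ℝ)*(m:ℝ)*k) + (-1*(m:ℝ) ^ 3) + (1*(n:ℝ)*(m:ℝ)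 ^ 2) + (2*(m:ℝ) ^ 2*k))*s ^ 2 + ((-2*(n:ℝ)*(m:ℝ)*k) + (-1*(m:ℝ) ^ 3) + (1*(n:ℝ)*(m:ℝ) ^ 2) + (2*(m:ℝ) ^ 2*k))*s ^ 4) * hs2
  have hmp : ((m:ℝ) * ((n:ℝ) - m)) ≠ 0 := by
    have : (0:ℝ) < (m:ℝ) * ((n:ℝ) - m) := by nlinarith
    exact this.ne'
  constructor
  · intro h
    rw [h, zero_mul] at key
    have hfac : ((m:ℝ) - 2 * k) - ((n:ℝ) - 4 * k) * a ^ 2 = 0 := by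
      rcases mul_eq_zero.mp key.symm with h1 | h1
      · exact absurd h1 hmp
      · exact h1
    rw [eq_div_iff hn4]
    linarith
  · intro h
    rw [eq_div_iff hn4] at h
    have hfac : ((m:ℝ) - 2 * k) - ((n:ℝ) - 4 * k) * a ^ 2 = 0 := by
      linarith
    rw [hfac, mul_zero] at key
    exact (mul_eq_zero.mp key).resolve_right hmul
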